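/- arXiv:math/9905077 — 5 statements merged into one kernel-verified Lean document; each statement's English description precedes it below -/
import Mathlib

section
/- Fix δ ∈ (1,2), s₀ > 0, and an integer n with |n| ≥ 2. If w is a C² function on [−s₀, s₀] satisfying w'' − n² w + (2/cosh² s) w = f with |f(s)| ≤ (cosh s)^δ and w(±s₀) = 0, then |w(s)| ≤ (cosh s)^δ/(n² − 2 − δ) for all s ∈ [−s₀, s₀]. -/
open Real Set
open Filter Topology


private lemma second_deriv_nonneg_of_isLocalMin {g : ℝ → ℝ} {t c : ℝ}
    (hmin : IsLocalMin g t)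
    (hdiff : ∀ᶠ x in 𝓝 t, DifferentiableAt ℝ g x)
    (hc : HasDerivAt (deriv g) c t) : 0 ≤ c := by
  by_contra hlt
  push_neg at hlt
  have h0 : deriv g t = 0 := hmin.deriv_eq_zero
  have hs := hasDerivAt_iff_tendsto_slope.mp hc
  have hev : ∀ᶠ x in 𝓝[≠] t, slope (deriv g) t x < c / 2 :=
    hs.eventually (gt_mem_nhds (by linarith))
  have hev' : ∀ᶠ x in 𝓝[>] t, deriv g x < 0 := by
    have hle : 𝓝[>] t ≤ 𝓝[≠] t := nhdsWithin_mono _ fun x hx => ne_of_gt hx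
    filter_upwards [hle hev, self_mem_nhdsWithin] with x hx hx'
    rw [slope_def_field, h0, sub_zero] at hx
    have hxt : 0 < x - t := sub_pos.mpr hx'
    rw [div_lt_iff₀ hxt] at hx
    nlinarith
  have hE : {x | deriv g x < 0 ∧ DifferentiableAt ℝ g x ∧ g t ≤ g x} ∈ 𝓝[>] t := by
    have h1 : ∀ᶠ x in 𝓝[>] t, DifferentiableAt ℝ g x := nhdsWithin_le_nhds hdiff
    have h2 : ∀ᶠ x in 𝓝[>] t, g t ≤ g x := nhdsWithin_le_nhds hmin
    filter_upwards [hev', h1, h2] with x hx hx' hx''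
    exact ⟨hx, hx', hx''⟩
  rw [mem_nhdsGT_iff_exists_Ioo_subset] at hE
  obtain ⟨u, hu, hsub⟩ := hE
  have hu' : t < u := hu
  set x := (t + u) / 2 with hx
  have htx : t < x := by rw [hx]; linarith
  have hxu : x < u := by rw [hx]; linarith
  have hdiffIoo : ∀ y ∈ Ioo t x, HasDerivAt g (deriv g y) y := fun y hy =>
    ((hsub ⟨hy.1, lt_trans hy.2 hxu⟩).2.1).hasDerivAt
  have hcont : ContinuousOn g (Icc t x) := by
    intro y hy
    rcases eq_or_lt_of_le hy.1 with h | h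
    · subst h
      exact hdiff.self_of_nhds.continuousAt.continuousWithinAt
    · exact ((hsub ⟨h, lt_of_le_of_lt hy.2 hxu⟩).2.1).continuousAt.continuousWithinAt
  obtain ⟨ξ, hξ, hξd⟩ := exists_hasDerivAt_eq_slope g (deriv g) htx hcont hdiffIoo
  have h1 : deriv g ξ < 0 := (hsub ⟨hξ.1, lt_trans hξ.2 hxu⟩).1
  have h2 : g t ≤ g x := (hsub ⟨htx, hxu⟩).2.2
  rw [hξd] at h1
  have := div_neg_iff.mp h1
  rcases this with ⟨h3, h4⟩ | ⟨h3, h4⟩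
  · linarith
  · linarith


private lemma coshV1 (δ : ℝ) (x : ℝ) :
    HasDerivAt (fun y => Real.cosh y ^ δ) (δ * (Real.cosh x ^ (δ - 1) * Real.sinh x)) x := by
  have h := (Real.hasDerivAt_cosh x).rpow_const (p := δ) (Or.inl (Real.cosh_pos x).ne')
  convert h using 1
  ring

private lemma coshV2 (δ : ℝ) (x : ℝ) :
    HasDerivAt (fun y => δ * (Real.cosh y ^ (δ - 1) * Real.sinh y))
      (δ * ((δ - 1) * (Real.cosh x ^ (δ - 2) * Real.sinh x * Real.sinh x)
        + Real.cosh x ^ (δ - 1) * Real.cosh x)) x := by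
  have h1 := (Real.hasDerivAt_cosh x).rpow_const (p := δ - 1) (Or.inl (Real.cosh_pos x).ne')
  have h2 := (h1.mul (Real.hasDerivAt_sinh x)).const_mul δ
  have e : δ - 1 - 1 = δ - 2 := by ring
  rw [e] at h2
  exact h2.congr_deriv (by ring)

private lemma key_ineq (δ : ℝ) (hδ : δ ∈ Set.Ioo (1:ℝ) 2) {K : ℝ} (hK4 : 4 ≤ K) (x : ℝ) :
    δ * ((δ - 1) * (Real.cosh x ^ (δ - 2) * Real.sinh x * Real.sinh x)
        + Real.cosh x ^ (δ - 1) * Real.cosh x)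
      - K * Real.cosh x ^ δ + 2 / (Real.cosh x) ^ 2 * Real.cosh x ^ δ
      ≤ -(K - 2 - δ) * Real.cosh x ^ δ := by
  obtain ⟨hδ1, hδ2⟩ := hδ
  set ch := Real.cosh x with hch
  have hchpos : 0 < ch := Real.cosh_pos x
  have hch1 : 1 ≤ ch := Real.one_le_cosh x
  have hA : ch ^ (δ - 1) * ch = ch ^ δ := by
    calc ch ^ (δ - 1) * ch = ch ^ (δ - 1) * ch ^ (1:ℝ) := by rw [Real.rpow_one]
      _ = ch ^ (δ - 1 + 1) := (Real.rpow_add hchpos _ _).symm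
      _ = ch ^ δ := by norm_num
  have hB : ch ^ (δ - 2) * ch ^ (2:ℕ) = ch ^ δ := by
    calc ch ^ (δ - 2) * ch ^ (2:ℕ) = ch ^ (δ - 2) * ch ^ ((2:ℕ):ℝ) := by
          rw [Real.rpow_natCast]
      _ = ch ^ (δ - 2 + 2) := (Real.rpow_add hchpos _ _).symm
      _ = ch ^ δ := by norm_num
  have hsq : Real.sinh x ^ 2 = ch ^ 2 - 1 := by
    have := Real.cosh_sq x; rw [← hch] at this; linarith
  have hBA : ch ^ (δ - 2) ≤ ch ^ δ := Real.rpow_le_rpow_of_exponent_le hch1 (by linarith)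
  have hBpos : 0 < ch ^ (δ - 2) := Real.rpow_pos_of_pos hchpos _
  have hsinhB : ch ^ (δ - 2) * Real.sinh x * Real.sinh x = ch ^ δ - ch ^ (δ - 2) := by
    have h1 : ch ^ (δ - 2) * Real.sinh x * Real.sinh x = ch ^ (δ - 2) * Real.sinh x ^ 2 := by ring
    rw [h1, hsq]
    linear_combination hB
  have h2B : 2 / ch ^ 2 * ch ^ δ = 2 * ch ^ (δ - 2) := by
    have hch2 : (0:ℝ) < ch ^ 2 := by positivity
    field_simp
    linear_combination (-1 : ℝ) * hB
  rw [hsinhB, hA, h2B]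
  nlinarith [mul_nonneg (show (0:ℝ) ≤ 2 + δ - δ ^ 2 by nlinarith) (sub_nonneg.2 hBA)]

private lemma upper_estimate (δ : ℝ) (hδ : δ ∈ Set.Ioo (1:ℝ) 2)
    (s₀ : ℝ) (hs₀ : 0 < s₀) (n : ℤ) (hn : 2 ≤ |n|) (w f : ℝ → ℝ)
    (hw : ContDiffOn ℝ 2 w (Icc (-s₀) s₀))
    (heq : ∀ s ∈ Icc (-s₀) s₀,
      iteratedDerivWithin 2 w (Icc (-s₀) s₀) s - (n : ℝ) ^ 2 * w s
        + (2 / (Real.cosh s) ^ 2) * w s = f s)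
    (hf : ∀ s ∈ Icc (-s₀) s₀, |f s| ≤ Real.cosh s ^ δ)
    (hb1 : w s₀ = 0) (hb2 : w (-s₀) = 0) :
    ∀ s ∈ Icc (-s₀) s₀, w s ≤ Real.cosh s ^ δ / ((n : ℝ) ^ 2 - 2 - δ) := by
  have hn4 : (4:ℝ) ≤ (n : ℝ) ^ 2 := by
    have h1 : (2:ℝ) ≤ |(n:ℝ)| := by
      rw [← Int.cast_abs]
      exact_mod_cast hn
    nlinarith [sq_abs ((n:ℝ))]
  have hC : (0:ℝ) < (n : ℝ) ^ 2 - 2 - δ := by nlinarith [hδ.2]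
  have hVpos : ∀ x : ℝ, (0:ℝ) < Real.cosh x ^ δ :=
    fun x => Real.rpow_pos_of_pos (Real.cosh_pos x) δ
  have hVcont : Continuous fun y => Real.cosh y ^ δ :=
    Differentiable.continuous fun x => (coshV1 δ x).differentiableAt
  intro s hs
  have key : ∀ ε > (0:ℝ), w s ≤ Real.cosh s ^ δ / ((n : ℝ) ^ 2 - 2 - δ) + ε := by
    intro ε hε
    by_contra hcon
    push_neg at hcon
    set g : ℝ → ℝ := fun x => Real.cosh x ^ δ / ((n : ℝ) ^ 2 - 2 - δ) + ε - w x with hgdef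
    have hgc : ContinuousOn g (Icc (-s₀) s₀) :=
      (((hVcont.div_const _).continuousOn.add continuousOn_const)).sub hw.continuousOn
    obtain ⟨t, ht, htmin⟩ := isCompact_Icc.exists_isMinOn ⟨s, hs⟩ hgc
    have hgs : g s < 0 := by
      have : g s = Real.cosh s ^ δ / ((n : ℝ) ^ 2 - 2 - δ) + ε - w s := rfl
      rw [this]; linarith
    have hgt0 : g t < 0 := lt_of_le_of_lt (htmin hs) hgs
    have hne1 : t ≠ s₀ := by
      intro h
      have : g t = Real.cosh s₀ ^ δ / ((n : ℝ) ^ 2 - 2 - δ) + ε := by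
        rw [h]; show _ + ε - w s₀ = _; rw [hb1]; ring
      rw [this] at hgt0
      have := hVpos s₀
      have h2 : 0 < Real.cosh s₀ ^ δ / ((n : ℝ) ^ 2 - 2 - δ) := by positivity
      linarith
    have hne2 : t ≠ -s₀ := by
      intro h
      have : g t = Real.cosh (-s₀) ^ δ / ((n : ℝ) ^ 2 - 2 - δ) + ε := by
        rw [h]; show _ + ε - w (-s₀) = _; rw [hb2]; ring
      rw [this] at hgt0
      have := hVpos (-s₀)
      have h2 : 0 < Real.cosh (-s₀) ^ δ / ((n : ℝ) ^ 2 - 2 - δ) := by positivity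
      linarith
    have hmem : t ∈ Ioo (-s₀) s₀ :=
      ⟨lt_of_le_of_ne ht.1 (Ne.symm hne2), lt_of_le_of_ne ht.2 hne1⟩
    have hnhds : Icc (-s₀) s₀ ∈ 𝓝 t := Icc_mem_nhds hmem.1 hmem.2
    have hloc : IsLocalMin g t := htmin.isLocalMin hnhds
    -- local smoothness of w
    have hct : ContDiffAt ℝ 2 w t := hw.contDiffAt hnhds
    obtain ⟨u, hu, hcu⟩ := hct.contDiffOn (m := 2) le_rfl (by simp)
    set U := interior u with hUdef
    have hUo : IsOpen U := isOpen_interior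
    have htU : t ∈ U := mem_interior_iff_mem_nhds.mpr hu
    have hcu' : ContDiffOn ℝ 2 w U := hcu.mono interior_subset
    have hdw : ∀ x ∈ U, DifferentiableAt ℝ w x := fun x hx =>
      ((hcu'.differentiableOn (by norm_num)) x hx).differentiableAt (hUo.mem_nhds hx)
    have hd2 : ContDiffOn ℝ 1 (deriv w) U := hcu'.deriv_of_isOpen hUo (by norm_num)
    have hdd : DifferentiableAt ℝ (deriv w) t :=
      ((hd2.differentiableOn one_ne_zero) t htU).differentiableAt (hUo.mem_nhds htU)
    -- derivative of g
    have hgd : ∀ x ∈ U, HasDerivAt g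
        (δ * (Real.cosh x ^ (δ - 1) * Real.sinh x) / ((n : ℝ) ^ 2 - 2 - δ) - deriv w x) x :=
      fun x hx => ((((coshV1 δ x).div_const _).add_const ε).sub ((hdw x hx).hasDerivAt))
    have hgdiff : ∀ᶠ x in 𝓝 t, DifferentiableAt ℝ g x := by
      filter_upwards [hUo.mem_nhds htU] with x hx
      exact (hgd x hx).differentiableAt
    have hderiv_eq : deriv g =ᶠ[𝓝 t]
        fun x => δ * (Real.cosh x ^ (δ - 1) * Real.sinh x) / ((n : ℝ) ^ 2 - 2 - δ) - deriv w x := by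
      filter_upwards [hUo.mem_nhds htU] with x hx
      exact (hgd x hx).deriv
    have h2 : HasDerivAt (deriv g)
        (δ * ((δ - 1) * (Real.cosh t ^ (δ - 2) * Real.sinh t * Real.sinh t)
          + Real.cosh t ^ (δ - 1) * Real.cosh t) / ((n : ℝ) ^ 2 - 2 - δ)
          - deriv (deriv w) t) t := by
      have h3 := ((coshV2 δ t).div_const ((n : ℝ) ^ 2 - 2 - δ)).sub hdd.hasDerivAt
      exact h3.congr_of_eventuallyEq hderiv_eq
    have hge0 := second_deriv_nonneg_of_isLocalMin hloc hgdiff h2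
    -- identify the second derivative with the iterated derivative in the equation
    have hsetEq : Icc (-s₀) s₀ =ᶠ[𝓝 t] (univ : Set ℝ) := Filter.eventuallyEq_univ.mpr hnhds
    have hiter : iteratedDerivWithin 2 w (Icc (-s₀) s₀) t = deriv (deriv w) t := by
      have e1 : iteratedDerivWithin 2 w (Icc (-s₀) s₀) t = iteratedDeriv 2 w t := by
        rw [iteratedDerivWithin_eq_iteratedFDerivWithin,
          iteratedFDerivWithin_congr_set hsetEq, iteratedFDerivWithin_univ]
        rfl
      rw [e1, show (2:ℕ) = 1 + 1 from rfl, iteratedDeriv_succ, iteratedDeriv_one]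
    -- assemble the contradiction
    have heqt := heq t ht
    rw [hiter] at heqt
    have hP2 : 2 / Real.cosh t ^ 2 ≤ 2 :=
      div_le_self (by norm_num) (by nlinarith [Real.one_le_cosh t])
    have hPpos : 0 < 2 / Real.cosh t ^ 2 := by positivity
    have hD : deriv (deriv w) t
        = f t + ((n : ℝ) ^ 2 - 2 / Real.cosh t ^ 2) * w t := by linear_combination heqt
    have hDC : deriv (deriv w) t * ((n : ℝ) ^ 2 - 2 - δ)
        ≤ δ * ((δ - 1) * (Real.cosh t ^ (δ - 2) * Real.sinh t * Real.sinh t)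
          + Real.cosh t ^ (δ - 1) * Real.cosh t) :=
      (le_div_iff₀ hC).mp (by linarith [hge0])
    have hkey := key_ineq δ hδ hn4 t
    have hVC : ((n : ℝ) ^ 2 - 2 - δ) * (Real.cosh t ^ δ / ((n : ℝ) ^ 2 - 2 - δ))
        = Real.cosh t ^ δ := by field_simp
    have hgt' : g t = Real.cosh t ^ δ / ((n : ℝ) ^ 2 - 2 - δ) + ε - w t := rfl
    have hCw : ((n : ℝ) ^ 2 - 2 - δ) * w t
        = Real.cosh t ^ δ + ((n : ℝ) ^ 2 - 2 - δ) * ε - ((n : ℝ) ^ 2 - 2 - δ) * g t := by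
      have h4 : ((n : ℝ) ^ 2 - 2 - δ) * g t
          = ((n : ℝ) ^ 2 - 2 - δ) * (Real.cosh t ^ δ / ((n : ℝ) ^ 2 - 2 - δ))
            + ((n : ℝ) ^ 2 - 2 - δ) * ε - ((n : ℝ) ^ 2 - 2 - δ) * w t := by
        rw [hgt']; ring
      rw [hVC] at h4; linarith
    have hNCw : ((n : ℝ) ^ 2 - 2 / Real.cosh t ^ 2) * (((n : ℝ) ^ 2 - 2 - δ) * w t)
        = ((n : ℝ) ^ 2 - 2 / Real.cosh t ^ 2) * (Real.cosh t ^ δ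
          + ((n : ℝ) ^ 2 - 2 - δ) * ε - ((n : ℝ) ^ 2 - 2 - δ) * g t) := by rw [hCw]
    have hfV : -(Real.cosh t ^ δ) ≤ f t := (abs_le.mp (hf t ht)).1
    have hq : ((n : ℝ) ^ 2 - 2 - δ) * (f t + Real.cosh t ^ δ)
        + ((n : ℝ) ^ 2 - 2 / Real.cosh t ^ 2) * (((n : ℝ) ^ 2 - 2 - δ) * (ε - g t)) ≤ 0 := by
      rw [hD] at hDC
      nlinarith [hDC, hkey, hNCw]
    have hpos1 : 0 ≤ ((n : ℝ) ^ 2 - 2 - δ) * (f t + Real.cosh t ^ δ) :=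
      mul_nonneg hC.le (by linarith)
    have hpos2 : 0 < ((n : ℝ) ^ 2 - 2 / Real.cosh t ^ 2)
        * (((n : ℝ) ^ 2 - 2 - δ) * (ε - g t)) :=
      mul_pos (by linarith) (mul_pos hC (by linarith))
    linarith
  by_contra hcon
  push_neg at hcon
  have := key ((w s - Real.cosh s ^ δ / ((n : ℝ) ^ 2 - 2 - δ)) / 2) (by linarith)
  linarith

/-- Maximum-principle estimate: if `w` is C² on `[−s₀,s₀]`, solves
`w'' − n² w + (2/cosh² s) w = f` with `|f| ≤ (cosh s)^δ` and `w(±s₀) = 0`, then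
`|w(s)| ≤ (cosh s)^δ/(n² − 2 − δ)` on `[−s₀,s₀]`. -/
theorem mode_estimate_truncated_catenoid (δ : ℝ) (hδ : δ ∈ Set.Ioo (1:ℝ) 2)
    (s₀ : ℝ) (hs₀ : 0 < s₀) (n : ℤ) (hn : 2 ≤ |n|) (w f : ℝ → ℝ)
    (hw : ContDiffOn ℝ 2 w (Icc (-s₀) s₀))
    (heq : ∀ s ∈ Icc (-s₀) s₀,
      iteratedDerivWithin 2 w (Icc (-s₀) s₀) s - (n : ℝ) ^ 2 * w s
        + (2 / (Real.cosh s) ^ 2) * w s = f s)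
    (hf : ∀ s ∈ Icc (-s₀) s₀, |f s| ≤ Real.cosh s ^ δ)
    (hb1 : w s₀ = 0) (hb2 : w (-s₀) = 0) :
    ∀ s ∈ Icc (-s₀) s₀, |w s| ≤ Real.cosh s ^ δ / ((n : ℝ) ^ 2 - 2 - δ) := by
  have hUD : UniqueDiffOn ℝ (Icc (-s₀) s₀) := uniqueDiffOn_Icc (by linarith)
  have heq' : ∀ s ∈ Icc (-s₀) s₀,
      iteratedDerivWithin 2 (fun x => -w x) (Icc (-s₀) s₀) s - (n : ℝ) ^ 2 * (-w s)
        + (2 / (Real.cosh s) ^ 2) * (-w s) = -f s := by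
    intro s' hs'
    have hneg : iteratedDerivWithin 2 (fun x => -w x) (Icc (-s₀) s₀) s'
        = -iteratedDerivWithin 2 w (Icc (-s₀) s₀) s' :=
      iteratedDerivWithin_fun_neg w
    rw [hneg]
    have := heq s' hs'
    linarith
  have hf' : ∀ s ∈ Icc (-s₀) s₀, |-f s| ≤ Real.cosh s ^ δ := by
    intro s' hs'; rw [abs_neg]; exact hf s' hs'
  intro s hs
  have hup := upper_estimate δ hδ s₀ hs₀ n hn w f hw heq hf hb1 hb2 s hs
  have hlo := upper_estimate δ hδ s₀ hs₀ n hn (fun x => -w x) (fun x => -f x)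
    hw.neg heq' hf' (by simp [hb1]) (by simp [hb2]) s hs
  rw [abs_le]
  constructor <;> linarith
end

section
/- Let δ' ∈ (−1, 0), s₀ > 0, and let n be an integer with |n| ≥ 1. If w is a C² function on [s₀, ∞) with w'' − n² w = f, |f(s)| ≤ e^{δ' s}, w(s₀) = 0, and w bounded, then |w(s)| ≤ 2 e^{δ' s}/(n² − δ'²) for all s ≥ s₀. -/
open Real Set

lemma aux_comparison (δ' : ℝ) (hδ'1 : -1 < δ') (hδ'0 : δ' < 0) (s₀ : ℝ) (N : ℝ) (hN : 1 ≤ N)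
    (v v' v'' : ℝ → ℝ)
    (hv_cont : ContinuousOn v (Ici s₀))
    (hv'_cont : ContinuousOn v' (Ici s₀))
    (hd1 : ∀ s ∈ Ioi s₀, HasDerivAt v (v' s) s)
    (hd2 : ∀ s ∈ Ioi s₀, HasDerivAt v' (v'' s) s)
    (hineq : ∀ s ∈ Ici s₀, -Real.exp (δ' * s) ≤ v'' s - N * v s)
    (hb : v s₀ ≤ 0)
    (M : ℝ) (hM : ∀ s ∈ Ici s₀, v s ≤ M) :
    ∀ s ∈ Ici s₀, v s ≤ 2 / (N - δ' ^ 2) * Real.exp (δ' * s) := by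
  have hNδ : 0 < N - δ' ^ 2 := by nlinarith
  set C := 2 / (N - δ' ^ 2) with hC
  have hCpos : 0 < C := by positivity
  have hCN : C * (N - δ' ^ 2) = 2 := by
    rw [hC]; field_simp
  clear_value C
  by_contra hcon
  push_neg at hcon
  obtain ⟨s₁, hs₁, hv₁⟩ := hcon
  set ε := (v s₁ - C * Real.exp (δ' * s₁)) / (2 * Real.exp (s₁ / 2)) with hε
  have hεpos : 0 < ε := by
    rw [hε]
    apply div_pos (by linarith) (by positivity)
  clear_value ε
  set h : ℝ → ℝ := fun s => v s - C * Real.exp (δ' * s) - ε * Real.exp (s / 2) with hh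
  set h' : ℝ → ℝ := fun s => v' s - C * (Real.exp (δ' * s) * δ') - ε * (Real.exp (s / 2) * (1 / 2))
    with hh'
  set h'' : ℝ → ℝ := fun s => v'' s - C * (Real.exp (δ' * s) * δ' * δ')
    - ε * (Real.exp (s / 2) * (1 / 2) * (1 / 2)) with hh''
  clear_value h h' h''
  -- derivative facts
  have hde : ∀ x : ℝ, HasDerivAt (fun s => C * Real.exp (δ' * s)) (C * (Real.exp (δ' * x) * δ')) x :=
    fun x => by simpa using ((((hasDerivAt_id x).const_mul δ').exp).const_mul C)
  have hde2 : ∀ x : ℝ, HasDerivAt (fun s => ε * Real.exp (s / 2)) (ε * (Real.exp (x / 2) * (1 / 2))) x := by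
    intro x
    have : HasDerivAt (fun s : ℝ => s / 2) (1 / 2) x := by
      simpa using (hasDerivAt_id x).div_const 2
    exact (this.exp).const_mul ε
  have hDh : ∀ x ∈ Ioi s₀, HasDerivAt h (h' x) x := by
    intro x hx
    simp only [hh, hh']
    exact ((hd1 x hx).sub (hde x)).sub (hde2 x)
  have hde' : ∀ x : ℝ, HasDerivAt (fun s => C * (Real.exp (δ' * s) * δ'))
      (C * (Real.exp (δ' * x) * δ' * δ')) x :=
    fun x => by simpa using (((((hasDerivAt_id x).const_mul δ').exp).mul_const δ').const_mul C)
  have hde2' : ∀ x : ℝ, HasDerivAt (fun s => ε * (Real.exp (s / 2) * (1 / 2)))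
      (ε * (Real.exp (x / 2) * (1 / 2) * (1 / 2))) x := by
    intro x
    have : HasDerivAt (fun s : ℝ => s / 2) (1 / 2) x := by
      simpa using (hasDerivAt_id x).div_const 2
    exact ((this.exp).mul_const (1 / 2)).const_mul ε
  have hDh' : ∀ x ∈ Ioi s₀, HasDerivAt h' (h'' x) x := by
    intro x hx
    simp only [hh', hh'']
    exact ((hd2 x hx).sub (hde' x)).sub (hde2' x)
  -- continuity
  have hch : ContinuousOn h (Ici s₀) := by
    rw [hh]; exact (hv_cont.sub (by fun_prop)).sub (by fun_prop)
  have hch' : ContinuousOn h' (Ici s₀) := by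
    rw [hh']; exact (hv'_cont.sub (by fun_prop)).sub (by fun_prop)
  -- positivity of h'' where h ≥ 0
  have hpp : ∀ x ∈ Ici s₀, 0 ≤ h x → 0 < h'' x := by
    intro x hx hhx
    have h1 := hineq x hx
    have hE : 0 < Real.exp (δ' * x) := Real.exp_pos _
    have hE2 : 0 < Real.exp (x / 2) := Real.exp_pos _
    have hvx : v x = h x + C * Real.exp (δ' * x) + ε * Real.exp (x / 2) := by
      simp only [hh]; ring
    have key1 : C * (N - δ' ^ 2) * Real.exp (δ' * x) = 2 * Real.exp (δ' * x) := by
      rw [hCN]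
    have hNv : N * v x = N * h x + N * (C * Real.exp (δ' * x))
        + N * (ε * Real.exp (x / 2)) := by rw [hvx]; ring
    have hsh : h'' x = v'' x - C * (Real.exp (δ' * x) * δ' * δ')
        - ε * (Real.exp (x / 2) * (1 / 2) * (1 / 2)) := by simp only [hh'']
    rw [hsh]
    show (0:ℝ) < v'' x - C * (Real.exp (δ' * x) * δ' * δ')
      - ε * (Real.exp (x / 2) * (1 / 2) * (1 / 2))
    have hCNe : C * N - C * δ' ^ 2 = 2 := by linear_combination hCN
    have hCN2 : N * (C * Real.exp (δ' * x))
        = 2 * Real.exp (δ' * x) + C * δ' ^ 2 * Real.exp (δ' * x) := by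
      linear_combination Real.exp (δ' * x) * hCNe
    linarith [hNv, h1, hCN2, mul_nonneg (by linarith : (0:ℝ) ≤ N) hhx,
      mul_nonneg (mul_nonneg hεpos.le hE2.le) (by linarith : (0:ℝ) ≤ N - 1),
      mul_pos hεpos hE2, hE]
  -- h s₁ > 0
  have hhs₁ : 0 < h s₁ := by
    have hE2 : 0 < Real.exp (s₁ / 2) := Real.exp_pos _
    have : ε * Real.exp (s₁ / 2) = (v s₁ - C * Real.exp (δ' * s₁)) / 2 := by
      rw [hε]; field_simp
    simp only [hh]
    rw [this]; linarith
  -- choose b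
  set b := max s₁ (2 * (M / ε)) with hbdef
  have hs₁b : s₁ ≤ b := le_max_left _ _
  have hs₀b : s₀ ≤ b := le_trans hs₁ hs₁b
  have hbneg : ∀ s, b ≤ s → h s < 0 := by
    intro s hbs
    have hsIci : s ∈ Ici s₀ := le_trans hs₀b hbs
    have h2 : M / ε ≤ s / 2 := by
      have := le_trans (le_max_right s₁ (2 * (M / ε))) hbs
      linarith
    have h3 : M / ε < Real.exp (s / 2) := by
      have := Real.add_one_le_exp (s / 2)
      linarith
    have h4 : M < ε * Real.exp (s / 2) := by
      calc M = ε * (M / ε) := by field_simp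
        _ < ε * Real.exp (s / 2) := mul_lt_mul_of_pos_left h3 hεpos
    have h5 : v s ≤ M := hM s hsIci
    have hE : 0 < Real.exp (δ' * s) := Real.exp_pos _
    simp only [hh]
    nlinarith
  -- max on Icc
  have hne : (Icc s₀ b).Nonempty := nonempty_Icc.mpr hs₀b
  obtain ⟨t, htmem, htmax⟩ := isCompact_Icc.exists_isMaxOn hne (hch.mono Icc_subset_Ici_self)
  have hts₁ : h s₁ ≤ h t := htmax ⟨hs₁, hs₁b⟩
  have htpos : 0 < h t := lt_of_lt_of_le hhs₁ hts₁
  -- global max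
  have hglobal : ∀ s ∈ Ici s₀, h s ≤ h t := by
    intro s hs
    by_cases hsb : s ≤ b
    · exact htmax ⟨hs, hsb⟩
    · exact le_of_lt (lt_of_lt_of_le (hbneg s (le_of_not_ge hsb)) (le_of_lt htpos))
  -- t > s₀
  have hhs₀ : h s₀ < 0 := by
    have hE : 0 < Real.exp (δ' * s₀) := Real.exp_pos _
    have hE2 : 0 < Real.exp (s₀ / 2) := Real.exp_pos _
    simp only [hh]
    nlinarith
  have hts₀ : s₀ < t := by
    rcases lt_or_eq_of_le htmem.1 with h1 | h1
    · exact h1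
    · exfalso; rw [← h1] at htpos; linarith
  -- h' t = 0
  have hloc : IsLocalMax h t := by
    filter_upwards [Ioi_mem_nhds hts₀] with s hs
    exact hglobal s (mem_Ici.mpr (le_of_lt hs))
  have hderiv0 : h' t = 0 := by
    have := hloc.deriv_eq_zero
    rwa [(hDh t hts₀).deriv] at this
  -- choose u > t with h > 0 on Icc t u
  have hcAt : ContinuousAt h t :=
    (hch t (le_of_lt hts₀)).continuousAt (Ici_mem_nhds hts₀)
  obtain ⟨r, hr, hball⟩ := Metric.mem_nhds_iff.mp (hcAt.preimage_mem_nhds (Ioi_mem_nhds htpos))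
  set u := t + r / 2 with hu
  have htu : t < u := by rw [hu]; linarith
  have hIccu : ∀ x ∈ Icc t u, 0 < h x := by
    intro x hx
    obtain ⟨hx1, hx2⟩ := hx
    rw [hu] at hx2
    apply hball
    rw [Metric.mem_ball, Real.dist_eq, abs_lt]
    exact ⟨by linarith, by linarith⟩
  have hIccIci : Icc t u ⊆ Ici s₀ := fun x hx => le_trans (le_of_lt hts₀) hx.1
  have hIooIoi : Ioo t u ⊆ Ioi s₀ := fun x hx => lt_trans hts₀ hx.1
  -- h' strictly mono on Icc t u
  have hmono' : StrictMonoOn h' (Icc t u) := by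
    apply strictMonoOn_of_deriv_pos (convex_Icc _ _) (hch'.mono hIccIci)
    intro x hx
    rw [interior_Icc] at hx
    rw [(hDh' x (hIooIoi hx)).deriv]
    exact hpp x (hIccIci (Ioo_subset_Icc_self hx)) (le_of_lt (hIccu x (Ioo_subset_Icc_self hx)))
  have hh'pos : ∀ x ∈ Ioo t u, 0 < h' x := by
    intro x hx
    have := hmono' (left_mem_Icc.mpr (le_of_lt htu)) (Ioo_subset_Icc_self hx) hx.1
    rwa [hderiv0] at this
  -- h strictly mono on Icc t u
  have hmono : StrictMonoOn h (Icc t u) := by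
    apply strictMonoOn_of_deriv_pos (convex_Icc _ _) (hch.mono hIccIci)
    intro x hx
    rw [interior_Icc] at hx
    rw [(hDh x (hIooIoi hx)).deriv]
    exact hh'pos x hx
  have : h t < h u := hmono (left_mem_Icc.mpr (le_of_lt htu)) (right_mem_Icc.mpr (le_of_lt htu)) htu
  have : h u ≤ h t := hglobal u (le_trans (le_of_lt hts₀) (le_of_lt htu))
  linarith

/-- Mode estimate on the half-infinite cylinder: if `w'' − n² w = f` on `[s₀,∞)` with
`|f(s)| ≤ e^{δ's}`, `w(s₀) = 0` and `w` bounded, and `δ' ∈ (−1,0)`, `|n| ≥ 1`, then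
`|w(s)| ≤ 2e^{δ's}/(n² − δ'²)` for all `s ≥ s₀`. -/
theorem half_cylinder_mode_estimate (δ' : ℝ) (hδ' : δ' ∈ Set.Ioo (-1 : ℝ) 0)
    (s₀ : ℝ) (hs₀ : 0 < s₀) (n : ℤ) (hn : 1 ≤ |n|) (w f : ℝ → ℝ)
    (hw : ContDiffOn ℝ 2 w (Ici s₀))
    (heq : ∀ s ∈ Ici s₀,
      iteratedDerivWithin 2 w (Ici s₀) s - (n : ℝ) ^ 2 * w s = f s)
    (hf : ∀ s ∈ Ici s₀, |f s| ≤ Real.exp (δ' * s))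
    (hb : w s₀ = 0)
    (hbdd : ∃ M : ℝ, ∀ s ∈ Ici s₀, |w s| ≤ M) :
    ∀ s ∈ Ici s₀, |w s| ≤ 2 * Real.exp (δ' * s) / ((n : ℝ) ^ 2 - δ' ^ 2) := by
  obtain ⟨M, hM⟩ := hbdd
  have hUD : UniqueDiffOn ℝ (Ici s₀) := uniqueDiffOn_Ici s₀
  have hN : (1 : ℝ) ≤ (n : ℝ) ^ 2 := by
    have h1 : (1 : ℝ) ≤ |(n : ℝ)| := by
      rw [← Int.cast_abs]
      exact_mod_cast hn
    nlinarith [sq_abs (n : ℝ)]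
  set W' := derivWithin w (Ici s₀) with hW'
  have hW'cd : ContDiffOn ℝ 1 W' (Ici s₀) := hw.derivWithin hUD (by norm_num)
  set W'' := iteratedDerivWithin 2 w (Ici s₀) with hW''
  have hd1 : ∀ s ∈ Ioi s₀, HasDerivAt w (W' s) s := by
    intro s hs
    have hmem : s ∈ Ici s₀ := mem_Ici.mpr (le_of_lt hs)
    have := ((hw.differentiableOn (by norm_num)) s hmem).hasDerivWithinAt
    exact this.hasDerivAt (Ici_mem_nhds hs)
  have hkey : ∀ s ∈ Ici s₀, derivWithin W' (Ici s₀) s = W'' s := by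
    intro s hs
    rw [hW'', iteratedDerivWithin_succ]
    exact derivWithin_congr (fun y hy => (congrFun iteratedDerivWithin_one y).symm)
      (congrFun iteratedDerivWithin_one s).symm
  have hd2 : ∀ s ∈ Ioi s₀, HasDerivAt W' (W'' s) s := by
    intro s hs
    have hmem : s ∈ Ici s₀ := mem_Ici.mpr (le_of_lt hs)
    have hdw : DifferentiableWithinAt ℝ W' (Ici s₀) s :=
      (hW'cd.differentiableOn one_ne_zero) s hmem
    have h1 := hdw.hasDerivWithinAt.hasDerivAt (Ici_mem_nhds hs)
    rwa [hkey s hmem] at h1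
  have key₁ := aux_comparison δ' hδ'.1 hδ'.2 s₀ ((n : ℝ) ^ 2) hN w W' W''
    hw.continuousOn hW'cd.continuousOn hd1 hd2
    (fun s hs => by
      have h1 := heq s hs
      have h2 := hf s hs
      have h3 := neg_abs_le (f s)
      linarith)
    hb.le M (fun s hs => (abs_le.mp (hM s hs)).2)
  have key₂ := aux_comparison δ' hδ'.1 hδ'.2 s₀ ((n : ℝ) ^ 2) hN (fun s => -w s)
    (fun s => -W' s) (fun s => -W'' s)
    hw.continuousOn.neg hW'cd.continuousOn.neg
    (fun s hs => (hd1 s hs).neg) (fun s hs => (hd2 s hs).neg)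
    (fun s hs => by
      have h1 := heq s hs
      have h2 := hf s hs
      have h3 := le_abs_self (f s)
      beta_reduce
      linarith)
    (by simp [hb]) M (fun s hs => by
      have := (abs_le.mp (hM s hs)).1
      beta_reduce
      linarith)
  intro s hs
  have e1 := key₁ s hs
  have e2 := key₂ s hs
  beta_reduce at e2
  have hrw : 2 / ((n : ℝ) ^ 2 - δ' ^ 2) * Real.exp (δ' * s)
      = 2 * Real.exp (δ' * s) / ((n : ℝ) ^ 2 - δ' ^ 2) := by ring
  rw [hrw] at e1 e2
  rw [abs_le]
  exact ⟨by linarith, e1⟩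
end

section
/- Let f₀ : [s₀,∞) → ℝ be continuous with |f₀(s)| ≤ e^{δ' s} for some δ' < 0. Then with c₀ = −∫_{s₀}^∞ ∫_t^∞ f₀(u) du dt, the function w₀(s) = c₀ + ∫_s^∞ ∫_t^∞ f₀(u) du dt satisfies w₀'' = f₀ on (s₀,∞), w₀(s₀) = 0, |c₀| ≤ e^{δ' s₀}/δ'², and |w₀(s) − c₀| ≤ e^{δ' s}/δ'² for all s ≥ s₀. -/
open Real Set MeasureTheory Filter Topology

lemma hc_exp_integrable {δ' : ℝ} (hδ' : δ' < 0) (t : ℝ) :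
    IntegrableOn (fun u => Real.exp (δ' * u)) (Ici t) := by
  rw [integrableOn_Ici_iff_integrableOn_Ioi]
  have h := exp_neg_integrableOn_Ioi t (b := -δ') (by linarith)
  simpa using h

lemma hc_exp_deriv {δ' : ℝ} (hδ' : δ' < 0) (x : ℝ) :
    HasDerivAt (fun x => Real.exp (δ' * x) / δ') (Real.exp (δ' * x)) x := by
  have h1 : HasDerivAt (fun x : ℝ => δ' * x) δ' x := by
    simpa using (hasDerivAt_id x).const_mul δ'
  have h2 := h1.exp.div_const δ'
  rwa [mul_div_assoc, div_self (ne_of_lt hδ'), mul_one] at h2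

lemma hc_exp_integral {δ' : ℝ} (hδ' : δ' < 0) (t : ℝ) :
    ∫ u in Ici t, Real.exp (δ' * u) = Real.exp (δ' * t) / (-δ') := by
  rw [integral_Ici_eq_integral_Ioi]
  have htend : Tendsto (fun x => Real.exp (δ' * x) / δ') atTop (𝓝 0) := by
    have h1 : Tendsto (fun x : ℝ => δ' * x) atTop atBot :=
      Filter.Tendsto.const_mul_atTop_of_neg hδ' tendsto_id
    have h2 : Tendsto (fun x : ℝ => Real.exp (δ' * x)) atTop (𝓝 0) :=
      Real.tendsto_exp_atBot.comp h1
    simpa using h2.div_const δ'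
  have := integral_Ioi_of_hasDerivAt_of_tendsto
    (f := fun x => Real.exp (δ' * x) / δ') (f' := fun x => Real.exp (δ' * x)) (a := t)
    ((hc_exp_deriv hδ' t).continuousAt.continuousWithinAt)
    (fun x _ => hc_exp_deriv hδ' x)
    (((hc_exp_integrable hδ' t).mono_set Ioi_subset_Ici_self))
    htend
  rw [this]; ring

/-- The `n = 0` mode on the half-infinite cylinder: with
`c₀ = −∫_{s₀}^∞ ∫_t^∞ f₀(u) du dt` and `w₀(s) = c₀ + ∫_s^∞ ∫_t^∞ f₀(u) du dt`,
one has `w₀'' = f₀` on `(s₀,∞)`, `w₀(s₀) = 0`, `|c₀| ≤ e^{δ's₀}/δ'²` and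
`|w₀(s) − c₀| ≤ e^{δ's}/δ'²` for `s ≥ s₀`. -/
theorem half_cylinder_mode_zero (δ' : ℝ) (hδ' : δ' < 0) (s₀ : ℝ) (f₀ : ℝ → ℝ)
    (hf₀ : ContinuousOn f₀ (Ici s₀))
    (hf : ∀ s ∈ Ici s₀, |f₀ s| ≤ Real.exp (δ' * s)) :
    (∀ s ∈ Ioi s₀,
      iteratedDeriv 2
          (fun s' : ℝ =>
            (-(∫ t in Ici s₀, ∫ u in Ici t, f₀ u))
              + ∫ t in Ici s', ∫ u in Ici t, f₀ u) s = f₀ s)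
    ∧
    ((-(∫ t in Ici s₀, ∫ u in Ici t, f₀ u))
        + (∫ t in Ici s₀, ∫ u in Ici t, f₀ u) = 0)
    ∧
    |(-(∫ t in Ici s₀, ∫ u in Ici t, f₀ u))| ≤ Real.exp (δ' * s₀) / δ' ^ 2
    ∧
    (∀ s ∈ Ici s₀,
      |∫ t in Ici s, ∫ u in Ici t, f₀ u| ≤ Real.exp (δ' * s) / δ' ^ 2) := by
  set F : ℝ → ℝ := fun t => ∫ u in Ici t, f₀ u with hFdef
  have hfint : ∀ t, s₀ ≤ t → IntegrableOn f₀ (Ici t) := by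
    intro t ht
    apply Integrable.mono' (hc_exp_integrable hδ' t)
    · exact (hf₀.mono (Ici_subset_Ici.mpr ht)).aestronglyMeasurable measurableSet_Ici
    · filter_upwards [ae_restrict_mem measurableSet_Ici] with u hu
      simpa using hf u (le_trans ht hu)
  have hFbound : ∀ t, s₀ ≤ t → |F t| ≤ Real.exp (δ' * t) / (-δ') := by
    intro t ht
    have h1 : |F t| ≤ ∫ u in Ici t, |f₀ u| := by
      simpa using norm_integral_le_integral_norm (μ := volume.restrict (Ici t)) f₀
    have h2 : (∫ u in Ici t, |f₀ u|) ≤ ∫ u in Ici t, Real.exp (δ' * u) := by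
      apply setIntegral_mono_on (hfint t ht).abs (hc_exp_integrable hδ' t) measurableSet_Ici
      exact fun u hu => hf u (le_trans ht hu)
    calc |F t| ≤ _ := h1
      _ ≤ _ := h2
      _ = _ := hc_exp_integral hδ' t
  have hsplit : ∀ (g : ℝ → ℝ), IntegrableOn g (Ici s₀) → ∀ s, s₀ ≤ s →
      (∫ t in Ici s, g t) = (∫ t in Ici s₀, g t) - ∫ t in s₀..s, g t := by
    intro g hg s hs
    have hdisj : Disjoint (Ico s₀ s) (Ici s) :=
      disjoint_left.mpr fun x hx hx' => absurd hx.2 (not_lt.mpr hx')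
    have hu := setIntegral_union (μ := volume) (f := g) hdisj measurableSet_Ici
      (hg.mono_set Ico_subset_Ici_self) (hg.mono_set (Ici_subset_Ici.mpr hs))
    rw [Ico_union_Ici_eq_Ici hs] at hu
    rw [hu, intervalIntegral.integral_of_le hs,
      ← setIntegral_congr_set (MeasureTheory.Ico_ae_eq_Ioc (μ := volume))]
    ring
  have hfca : ∀ x ∈ Ioi s₀, ContinuousAt f₀ x := fun x hx =>
    (hf₀ x (Ioi_subset_Ici_self hx)).continuousAt (Ici_mem_nhds (mem_Ioi.mp hx))
  have hFderiv : ∀ x ∈ Ioi s₀, HasDerivAt F (-f₀ x) x := by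
    intro x hx
    have hP : HasDerivAt (fun s => ∫ t in s₀..s, f₀ t) (f₀ x) x :=
      intervalIntegral.integral_hasDerivAt_right
        (((hfint s₀ le_rfl).mono_set (by
          rw [uIcc_of_le (le_of_lt hx)]; exact Icc_subset_Ici_self)).intervalIntegrable)
        (ContinuousAt.stronglyMeasurableAtFilter isOpen_Ioi hfca x hx)
        (hfca x hx)
    have h2 : HasDerivAt (fun s => (∫ t in Ici s₀, f₀ t) - ∫ t in s₀..s, f₀ t) (-f₀ x) x := by
      have h := (hasDerivAt_const x (∫ t in Ici s₀, f₀ t)).sub hP; rw [zero_sub] at h; exact h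
    apply h2.congr_of_eventuallyEq
    filter_upwards [isOpen_Ioi.mem_nhds hx] with y hy
    exact hsplit f₀ (hfint s₀ le_rfl) y (le_of_lt hy)
  have hFcont : ContinuousOn F (Ioi s₀) := fun x hx =>
    (hFderiv x hx).continuousAt.continuousWithinAt
  have hFint : ∀ s, s₀ ≤ s → IntegrableOn F (Ici s) := by
    intro s hs
    rw [integrableOn_Ici_iff_integrableOn_Ioi]
    apply Integrable.mono' (((hc_exp_integrable hδ' s).mono_set Ioi_subset_Ici_self).div_const (-δ'))
    · exact (hFcont.mono (Ioi_subset_Ioi hs)).aestronglyMeasurable measurableSet_Ioi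
    · filter_upwards [ae_restrict_mem measurableSet_Ioi] with t ht
      simpa using hFbound t (le_of_lt (lt_of_le_of_lt hs ht))
  have hGbound : ∀ s, s₀ ≤ s → |∫ t in Ici s, F t| ≤ Real.exp (δ' * s) / δ' ^ 2 := by
    intro s hs
    have h1 : |∫ t in Ici s, F t| ≤ ∫ t in Ici s, |F t| := by
      simpa using norm_integral_le_integral_norm (μ := volume.restrict (Ici s)) F
    have h2 : (∫ t in Ici s, |F t|) ≤ ∫ t in Ici s, Real.exp (δ' * t) / (-δ') := by
      apply setIntegral_mono_on (hFint s hs).abs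
        ((hc_exp_integrable hδ' s).div_const (-δ')) measurableSet_Ici
      exact fun t ht => hFbound t (le_trans hs ht)
    have h3 : (∫ t in Ici s, Real.exp (δ' * t) / (-δ')) = Real.exp (δ' * s) / δ' ^ 2 := by
      rw [integral_div, hc_exp_integral hδ' s]
      field_simp
    linarith
  refine ⟨?_, by ring, by rw [abs_neg]; exact hGbound s₀ le_rfl, fun s hs => hGbound s hs⟩
  · intro s hs
    have hGderiv : ∀ x ∈ Ioi s₀, HasDerivAt (fun s' => ∫ t in Ici s', F t) (-F x) x := by
      intro x hx
      have hP : HasDerivAt (fun s' => ∫ t in s₀..s', F t) (F x) x :=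
        intervalIntegral.integral_hasDerivAt_right
          (((hFint s₀ le_rfl).mono_set (by
            rw [uIcc_of_le (le_of_lt hx)]; exact Icc_subset_Ici_self)).intervalIntegrable)
          (ContinuousOn.stronglyMeasurableAtFilter isOpen_Ioi hFcont x hx)
          ((hFcont x hx).continuousAt (Ioi_mem_nhds hx))
      have h2 : HasDerivAt (fun s' => (∫ t in Ici s₀, F t) - ∫ t in s₀..s', F t) (-F x) x := by
        have h := (hasDerivAt_const x (∫ t in Ici s₀, F t)).sub hP; rw [zero_sub] at h; exact h
      apply h2.congr_of_eventuallyEq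
      filter_upwards [isOpen_Ioi.mem_nhds hx] with y hy
      exact hsplit F (hFint s₀ le_rfl) y (le_of_lt hy)
    have hwderiv : ∀ x ∈ Ioi s₀,
        HasDerivAt (fun s' : ℝ => (-(∫ t in Ici s₀, F t)) + ∫ t in Ici s', F t) (-F x) x := by
      intro x hx
      have h := (hasDerivAt_const x (-(∫ t in Ici s₀, F t))).add (hGderiv x hx); rw [zero_add] at h; exact h
    rw [iteratedDeriv_succ, iteratedDeriv_one]
    have hev : deriv (fun s' : ℝ => (-(∫ t in Ici s₀, F t)) + ∫ t in Ici s', F t)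
        =ᶠ[𝓝 s] fun x => -F x := by
      filter_upwards [isOpen_Ioi.mem_nhds hs] with y hy
      exact (hwderiv y hy).deriv
    rw [hev.deriv_eq]
    have hneg : HasDerivAt (fun x => -F x) (f₀ s) s := by
      have h := (hFderiv s hs).neg; rw [neg_neg] at h; exact h
    rw [hneg.deriv]
end

section
/- Let H₀ ≠ 0 and let α₁, β₁, α₂, β₂ be real numbers with β₁ = H₀ − α₁ and β₂ = H₀ − α₂. If (α₁α₂ + β₁β₂) = (α₁β₂ + β₁α₂) = −(α₁β₁ + α₂β₂), then either (α₁, β₁) = (H₀/2, H₀/2) and {α₂, β₂} = {3H₀/2, −H₀/2}, or (α₂, β₂) = (H₀/2, H₀/2) and {α₁, β₁} = {3H₀/2, −H₀/2}. -/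
/-- If two CMC surfaces with mean curvature `H₀ = αᵢ + βᵢ` satisfy the identical
degeneracy of the angle polynomial, i.e.
`α₁α₂ + β₁β₂ = α₁β₂ + β₁α₂ = −(α₁β₁ + α₂β₂)`, then one point is umbilic with
curvatures `(H₀/2, H₀/2)` and the other has curvatures `{3H₀/2, −H₀/2}`. -/
theorem degenerate_angle_polynomial (H₀ α₁ β₁ α₂ β₂ : ℝ) (hH₀ : H₀ ≠ 0)
    (h1 : β₁ = H₀ - α₁) (h2 : β₂ = H₀ - α₂)
    (e1 : α₁ * α₂ + β₁ * β₂ = α₁ * β₂ + β₁ * α₂)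
    (e2 : α₁ * β₂ + β₁ * α₂ = -(α₁ * β₁ + α₂ * β₂)) :
    (α₁ = H₀ / 2 ∧ β₁ = H₀ / 2 ∧
      ((α₂ = 3 * H₀ / 2 ∧ β₂ = -H₀ / 2) ∨ (α₂ = -H₀ / 2 ∧ β₂ = 3 * H₀ / 2)))
    ∨
    (α₂ = H₀ / 2 ∧ β₂ = H₀ / 2 ∧
      ((α₁ = 3 * H₀ / 2 ∧ β₁ = -H₀ / 2) ∨ (α₁ = -H₀ / 2 ∧ β₁ = 3 * H₀ / 2))) := by
  subst h1 h2
  have key : (2 * α₁ - H₀) * (2 * α₂ - H₀) = 0 := by nlinarith [e1]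
  rcases mul_eq_zero.mp key with h | h
  · left
    have hα₁ : α₁ = H₀ / 2 := by linarith
    subst hα₁
    refine ⟨rfl, by ring, ?_⟩
    have q : (α₂ - 3 * H₀ / 2) * (α₂ + H₀ / 2) = 0 := by nlinarith [e2]
    rcases mul_eq_zero.mp q with h | h
    · left; constructor <;> [linarith; linarith]
    · right; constructor <;> [linarith; linarith]
  · right
    have hα₂ : α₂ = H₀ / 2 := by linarith
    subst hα₂
    refine ⟨rfl, by ring, ?_⟩
    have q : (α₁ - 3 * H₀ / 2) * (α₁ + H₀ / 2) = 0 := by nlinarith [e2]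
    rcases mul_eq_zero.mp q with h | h
    · left; constructor <;> [linarith; linarith]
    · right; constructor <;> [linarith; linarith]
end

section
/- Let w ∈ C²(ℝ × S¹) satisfy ∂²_{ss}w + ∂²_{θθ}w + (2/cosh²s)w = 0 on ℝ × S¹ and suppose all Fourier coefficients w_n(s) = (1/2π)∫ w(s,θ)e^{−inθ}dθ with |n| ≥ 2 decay exponentially as s → ±∞ together with their first derivatives. Then w_n ≡ 0 for all |n| ≥ 2. -/
open Real Complex intervalIntegral

/-- The `n`-th Fourier coefficient in `θ` of a function on the cylinder. -/
noncomputable def cylFourierCoeff (w : ℝ → ℝ → ℂ) (n : ℤ) (s : ℝ) : ℂ :=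
  (1 / (2 * (Real.pi : ℂ))) *
    ∫ θ in (0:ℝ)..(2 * Real.pi), w s θ * Complex.exp (-Complex.I * n * θ)

section Aux
open Set Filter

/-- Differentiation under an interval integral, for continuous integrand families. -/
lemma hasDerivAt_paramInt {g g' : ℝ → ℝ → ℂ} {b : ℝ}
    (hgc : Continuous fun p : ℝ × ℝ => g p.1 p.2)
    (hg'c : Continuous fun p : ℝ × ℝ => g' p.1 p.2)
    (hdg : ∀ s θ : ℝ, HasDerivAt (fun s' => g s' θ) (g' s θ) s)
    (s : ℝ) :
    HasDerivAt (fun s' => ∫ θ in (0:ℝ)..b, g s' θ) (∫ θ in (0:ℝ)..b, g' s θ) s := by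
  obtain ⟨C, hC⟩ :=
    ((isCompact_Icc (a := s - 1) (b := s + 1)).prod
      (isCompact_uIcc (a := (0:ℝ)) (b := b))).exists_bound_of_continuousOn hg'c.continuousOn
  refine (intervalIntegral.hasDerivAt_integral_of_dominated_loc_of_deriv_le
      (F := g) (F' := g') (bound := fun _ => C) (s := Metric.ball s 1) (Metric.ball_mem_nhds s one_pos) ?_ ?_ ?_ ?_ ?_ ?_).2
  · exact Eventually.of_forall fun x =>
      (hgc.comp (Continuous.prodMk_right x)).aestronglyMeasurable
  · exact (hgc.comp (Continuous.prodMk_right s)).intervalIntegrable _ _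
  · exact (hg'c.comp (Continuous.prodMk_right s)).aestronglyMeasurable
  · refine Eventually.of_forall fun t ht x hx => hC (x, t) ⟨?_, uIoc_subset_uIcc ht⟩
    rw [Real.ball_eq_Ioo] at hx
    exact ⟨hx.1.le, hx.2.le⟩
  · exact intervalIntegrable_const
  · exact Eventually.of_forall fun t _ x _ => hdg x t

/-- A real solution of `u'' = q u` with `q ≥ 0` decaying at `±∞` vanishes. -/
lemma real_ode_vanish {u u' : ℝ → ℝ} {q : ℝ → ℝ} {C a : ℝ}
    (hu : ∀ s, HasDerivAt u (u' s) s)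
    (hu' : ∀ s, HasDerivAt u' (q s * u s) s)
    (hq : ∀ s, 0 ≤ q s) (ha : 0 < a)
    (hdec : ∀ s, |u s| ≤ C * Real.exp (-a * |s|)) :
    ∀ s, u s = 0 := by
  set v : ℝ → ℝ := fun s => u s * u s with hvdef
  have hv' : ∀ s, HasDerivAt v (u' s * u s + u s * u' s) s := fun s => (hu s).mul (hu s)
  have hdv : deriv v = fun s => u' s * u s + u s * u' s := funext fun s => (hv' s).deriv
  have hv'' : ∀ s, HasDerivAt (deriv v)
      ((q s * u s) * u s + u' s * u' s + (u' s * u' s + u s * (q s * u s))) s := by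
    intro s
    rw [hdv]
    exact ((hu' s).mul (hu s)).add ((hu s).mul (hu' s))
  have hconv : ConvexOn ℝ Set.univ v := by
    refine convexOn_univ_of_deriv2_nonneg (fun s => (hv' s).differentiableAt)
      (fun s => (hv'' s).differentiableAt) (fun s => ?_)
    have h2 : deriv (deriv v) s
        = (q s * u s) * u s + u' s * u' s + (u' s * u' s + u s * (q s * u s)) :=
      (hv'' s).deriv
    have : deriv^[2] v s = deriv (deriv v) s := by
      simp [Function.iterate_succ_apply']
    rw [this, h2]
    nlinarith [hq s, mul_self_nonneg (u s), mul_self_nonneg (u' s)]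
  intro s
  have key : ∀ R, |s| ≤ R → v s ≤ (C * Real.exp (-a * R)) ^ 2 := by
    intro R hR
    have hR0 : 0 ≤ R := le_trans (abs_nonneg s) hR
    have hmem : s ∈ segment ℝ (-R) R := by
      rw [segment_eq_Icc (by linarith)]
      constructor
      · linarith [neg_abs_le s]
      · linarith [le_abs_self s]
    have h1 : v s ≤ max (v (-R)) (v R) :=
      hconv.le_on_segment (mem_univ _) (mem_univ _) hmem
    have hb : ∀ t : ℝ, |t| = R → v t ≤ (C * Real.exp (-a * R)) ^ 2 := by
      intro t htR
      have h3 : |u t| ≤ C * Real.exp (-a * R) := by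
        have := hdec t; rwa [htR] at this
      calc v t = |u t| * |u t| := by rw [hvdef]; simp [abs_mul_abs_self]
        _ ≤ (C * Real.exp (-a * R)) * (C * Real.exp (-a * R)) :=
            mul_le_mul h3 h3 (abs_nonneg _) (le_trans (abs_nonneg _) h3)
        _ = (C * Real.exp (-a * R)) ^ 2 := by ring
    refine le_trans h1 (max_le (hb _ ?_) (hb _ ?_))
    · rw [abs_neg, _root_.abs_of_nonneg hR0]
    · rw [_root_.abs_of_nonneg hR0]
  have hlim : Tendsto (fun R => (C * Real.exp (-a * R)) ^ 2) atTop (nhds 0) := by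
    have h1 : Tendsto (fun R : ℝ => -a * R) atTop atBot :=
      tendsto_id.const_mul_atTop_of_neg (by linarith)
    have h2 : Tendsto (fun R : ℝ => Real.exp (-a * R)) atTop (nhds 0) :=
      Real.tendsto_exp_atBot.comp h1
    have := ((h2.const_mul C).pow 2)
    simpa using this
  have hle : v s ≤ 0 := by
    refine ge_of_tendsto hlim ?_
    filter_upwards [eventually_ge_atTop |s|] with R hR using key R hR
  have : u s * u s = 0 := le_antisymm hle (mul_self_nonneg _)
  exact mul_self_eq_zero.mp this

lemma complex_ode_vanish {f f' : ℝ → ℂ} {q : ℝ → ℝ} {C a : ℝ}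
    (hf : ∀ s, HasDerivAt f (f' s) s)
    (hf' : ∀ s, HasDerivAt f' (((q s : ℝ) : ℂ) * f s) s)
    (hq : ∀ s, 0 ≤ q s) (ha : 0 < a)
    (hdec : ∀ s, ‖f s‖ ≤ C * Real.exp (-a * |s|)) :
    ∀ s, f s = 0 := by
  have hre1 : ∀ s, HasDerivAt (fun s => (f s).re) ((f' s).re) s := fun s =>
    (Complex.reCLM.hasFDerivAt.comp_hasDerivAt s (hf s))
  have hre2 : ∀ s, HasDerivAt (fun s => (f' s).re) (q s * (f s).re) s := fun s => by
    simpa [Complex.mul_re, Function.comp_def] using (Complex.reCLM.hasFDerivAt.comp_hasDerivAt s (hf' s))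
  have him1 : ∀ s, HasDerivAt (fun s => (f s).im) ((f' s).im) s := fun s =>
    (Complex.imCLM.hasFDerivAt.comp_hasDerivAt s (hf s))
  have him2 : ∀ s, HasDerivAt (fun s => (f' s).im) (q s * (f s).im) s := fun s => by
    simpa [Complex.mul_im, Function.comp_def] using (Complex.imCLM.hasFDerivAt.comp_hasDerivAt s (hf' s))
  have hdre : ∀ s, |(f s).re| ≤ C * Real.exp (-a * |s|) := fun s =>
    le_trans (Complex.abs_re_le_norm _) (hdec s)
  have hdim : ∀ s, |(f s).im| ≤ C * Real.exp (-a * |s|) := fun s =>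
    le_trans (Complex.abs_im_le_norm _) (hdec s)
  have h1 := real_ode_vanish hre1 hre2 hq ha hdre
  have h2 := real_ode_vanish him1 him2 hq ha hdim
  intro s
  exact Complex.ext (h1 s) (h2 s)

end Aux

open Set Filter in
/-- If `w` is a C² solution of the catenoid Jacobi equation on `ℝ × S¹` whose Fourier
coefficients of modes `|n| ≥ 2` decay exponentially (with their first derivatives) as
`s → ±∞`, then all these coefficients vanish identically. -/
theorem high_modes_vanish (w : ℝ → ℝ → ℂ)
    (hw : ContDiff ℝ 2 (fun p : ℝ × ℝ => w p.1 p.2))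
    (hper : ∀ s θ : ℝ, w s (θ + 2 * Real.pi) = w s θ)
    (heq : ∀ s θ : ℝ,
      iteratedDeriv 2 (fun s' : ℝ => w s' θ) s
        + iteratedDeriv 2 (w s) θ
        + ((2 / (Real.cosh s) ^ 2 : ℝ) : ℂ) * w s θ = 0)
    (hdecay : ∀ n : ℤ, 2 ≤ |n| →
      ∃ C a : ℝ, 0 < a ∧ ∀ s : ℝ,
        ‖cylFourierCoeff w n s‖ + ‖deriv (cylFourierCoeff w n) s‖
          ≤ C * Real.exp (-a * |s|)) :
    ∀ n : ℤ, 2 ≤ |n| → ∀ s : ℝ, cylFourierCoeff w n s = 0 := by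
  intro n hn
  set W : ℝ × ℝ → ℂ := fun p => w p.1 p.2 with hWdef
  have hWc : Continuous W := hw.continuous
  have hWdiff : Differentiable ℝ W := hw.differentiable (by norm_num)
  have hW1 : ContDiff ℝ 1 (fderiv ℝ W) := hw.fderiv_right (by norm_num)
  set d1 : ℝ × ℝ → ℂ := fun p => fderiv ℝ W p (1, 0) with hd1def
  set e1 : ℝ × ℝ → ℂ := fun p => fderiv ℝ W p (0, 1) with he1def
  have hd1 : ContDiff ℝ 1 d1 := hW1.clm_apply contDiff_const
  have he1sm : ContDiff ℝ 1 e1 := hW1.clm_apply contDiff_const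
  set d2 : ℝ × ℝ → ℂ := fun p => fderiv ℝ d1 p (1, 0) with hd2def
  set e2 : ℝ × ℝ → ℂ := fun p => fderiv ℝ e1 p (0, 1) with he2def
  have hd2c : Continuous d2 :=
    ((hd1.fderiv_right (m := 0) (by norm_num)).clm_apply contDiff_const).continuous
  have he2c : Continuous e2 :=
    ((he1sm.fderiv_right (m := 0) (by norm_num)).clm_apply contDiff_const).continuous
  -- partial derivatives
  have hDs : ∀ θ s : ℝ, HasDerivAt (fun s' => w s' θ) (d1 (s, θ)) s := by
    intro θ s
    have hline : HasDerivAt (fun s' : ℝ => ((s', θ) : ℝ × ℝ)) ((1:ℝ), (0:ℝ)) s :=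
      (hasDerivAt_id s).prodMk (hasDerivAt_const s θ)
    exact (hWdiff (s, θ)).hasFDerivAt.comp_hasDerivAt s hline
  have hDs2 : ∀ θ s : ℝ, HasDerivAt (fun s' => d1 (s', θ)) (d2 (s, θ)) s := by
    intro θ s
    have hline : HasDerivAt (fun s' : ℝ => ((s', θ) : ℝ × ℝ)) ((1:ℝ), (0:ℝ)) s :=
      (hasDerivAt_id s).prodMk (hasDerivAt_const s θ)
    exact ((hd1.differentiable one_ne_zero) (s, θ)).hasFDerivAt.comp_hasDerivAt s hline
  have hDθ : ∀ s θ : ℝ, HasDerivAt (w s) (e1 (s, θ)) θ := by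
    intro s θ
    have hline : HasDerivAt (fun θ' : ℝ => ((s, θ') : ℝ × ℝ)) ((0:ℝ), (1:ℝ)) θ :=
      (hasDerivAt_const θ s).prodMk (hasDerivAt_id θ)
    exact (hWdiff (s, θ)).hasFDerivAt.comp_hasDerivAt θ hline
  have hDθ2 : ∀ s θ : ℝ, HasDerivAt (fun θ' => e1 (s, θ')) (e2 (s, θ)) θ := by
    intro s θ
    have hline : HasDerivAt (fun θ' : ℝ => ((s, θ') : ℝ × ℝ)) ((0:ℝ), (1:ℝ)) θ :=
      (hasDerivAt_const θ s).prodMk (hasDerivAt_id θ)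
    exact ((he1sm.differentiable one_ne_zero) (s, θ)).hasFDerivAt.comp_hasDerivAt θ hline
  -- rewrite the PDE
  have hiter_s : ∀ θ s : ℝ, iteratedDeriv 2 (fun s' => w s' θ) s = d2 (s, θ) := by
    intro θ s
    rw [iteratedDeriv_succ, iteratedDeriv_one]
    have h : deriv (fun s' => w s' θ) = fun s' => d1 (s', θ) :=
      funext fun s' => (hDs θ s').deriv
    rw [h]
    exact (hDs2 θ s).deriv
  have hiter_t : ∀ s θ : ℝ, iteratedDeriv 2 (w s) θ = e2 (s, θ) := by
    intro s θ
    rw [iteratedDeriv_succ, iteratedDeriv_one]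
    have h : deriv (w s) = fun θ' => e1 (s, θ') := funext fun θ' => (hDθ s θ').deriv
    rw [h]
    exact (hDθ2 s θ).deriv
  have heq' : ∀ s θ : ℝ,
      d2 (s, θ) = -e2 (s, θ) - ((2 / (Real.cosh s) ^ 2 : ℝ) : ℂ) * w s θ := by
    intro s θ
    have h := heq s θ
    rw [hiter_s θ s, hiter_t s θ] at h
    linear_combination h
  -- periodicity of e1
  have hper1 : ∀ s θ : ℝ, e1 (s, θ + 2 * π) = e1 (s, θ) := by
    intro s θ
    have h1 : HasDerivAt (fun θ' => w s (θ' + 2 * π)) (e1 (s, θ + 2 * π)) θ := by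
      have hg : HasDerivAt (fun x : ℝ => x + 2 * π) 1 θ := by
        simpa using (hasDerivAt_id θ).add_const (2 * π)
      have h := ((hDθ s (θ + 2 * π)).hasFDerivAt).comp_hasDerivAt θ hg
      simpa [Function.comp_def] using h
    have h2 : (fun θ' => w s (θ' + 2 * π)) = w s := funext fun θ' => hper s θ'
    rw [h2] at h1
    exact h1.unique (hDθ s θ)
  -- the character
  set cn : ℝ → ℂ := fun θ => Complex.exp (-Complex.I * n * θ) with hcndef
  have hcnc : Continuous cn :=
    Complex.continuous_exp.comp (continuous_const.mul Complex.continuous_ofReal)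
  have hcd : ∀ θ : ℝ, HasDerivAt cn (-Complex.I * n * cn θ) θ := by
    intro θ
    have h0 : HasDerivAt (fun x : ℝ => (x : ℂ)) 1 θ := by
      exact Complex.ofRealCLM.hasDerivAt (x := θ)
    have h1 : HasDerivAt (fun x : ℝ => -Complex.I * n * (x : ℂ)) (-Complex.I * n) θ := by
      simpa using h0.const_mul (-Complex.I * (n:ℂ))
    have h2 := h1.cexp
    rw [show -Complex.I * (n:ℂ) * cn θ = cn θ * (-Complex.I * (n:ℂ)) from mul_comm _ _]
    exact h2
  have hcn0 : cn 0 = 1 := by simp [hcndef]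
  have hcn2π : cn (2 * π) = 1 := by
    have harg : -Complex.I * n * ((2 * π : ℝ) : ℂ) = ((-n : ℤ) : ℂ) * (2 * (π:ℂ) * Complex.I) := by
      push_cast; ring
    rw [hcndef]
    show Complex.exp (-Complex.I * n * ((2 * π : ℝ) : ℂ)) = 1
    rw [harg]
    exact Complex.exp_int_mul_two_pi_mul_I (-n)
  -- continuity of slices
  have hslice : ∀ s, Continuous (w s) := fun s => hWc.comp (Continuous.prodMk_right s)
  have he1slice : ∀ s, Continuous (fun θ => e1 (s, θ)) := fun s =>
    he1sm.continuous.comp (Continuous.prodMk_right s)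
  have he2slice : ∀ s, Continuous (fun θ => e2 (s, θ)) := fun s =>
    he2c.comp (Continuous.prodMk_right s)
  -- integration by parts
  have ibp1 : ∀ s, (∫ θ in (0:ℝ)..(2*π), cn θ * e1 (s, θ))
      = Complex.I * n * ∫ θ in (0:ℝ)..(2*π), cn θ * w s θ := by
    intro s
    have h := intervalIntegral.integral_mul_deriv_eq_deriv_mul
      (a := (0:ℝ)) (b := 2*π) (u := cn) (u' := fun θ => -Complex.I * n * cn θ)
      (v := w s) (v' := fun θ => e1 (s, θ))
      (fun θ _ => hcd θ) (fun θ _ => hDθ s θ)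
      ((continuous_const.mul hcnc).intervalIntegrable _ _)
      ((he1slice s).intervalIntegrable _ _)
    rw [hcn0, hcn2π] at h
    have hw2π : w s (2 * π) = w s 0 := by simpa using hper s 0
    rw [hw2π] at h
    rw [h]
    have hc : (fun θ => -Complex.I * n * cn θ * w s θ)
        = fun θ => (-Complex.I * n) * (cn θ * w s θ) := by funext θ; ring
    rw [hc, intervalIntegral.integral_const_mul]
    ring
  have ibp2 : ∀ s, (∫ θ in (0:ℝ)..(2*π), cn θ * e2 (s, θ))
      = Complex.I * n * ∫ θ in (0:ℝ)..(2*π), cn θ * e1 (s, θ) := by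
    intro s
    have h := intervalIntegral.integral_mul_deriv_eq_deriv_mul
      (a := (0:ℝ)) (b := 2*π) (u := cn) (u' := fun θ => -Complex.I * n * cn θ)
      (v := fun θ => e1 (s, θ)) (v' := fun θ => e2 (s, θ))
      (fun θ _ => hcd θ) (fun θ _ => hDθ2 s θ)
      ((continuous_const.mul hcnc).intervalIntegrable _ _)
      ((he2slice s).intervalIntegrable _ _)
    beta_reduce at h
    rw [hcn0, hcn2π] at h
    have he2π : e1 (s, 2 * π) = e1 (s, 0) := by simpa using hper1 s 0
    rw [he2π] at h
    rw [h]
    have hc : (fun θ => -Complex.I * n * cn θ * e1 (s, θ))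
        = fun θ => (-Complex.I * n) * (cn θ * e1 (s, θ)) := by funext θ; ring
    rw [hc, intervalIntegral.integral_const_mul]
    ring
  have ibp : ∀ s, (∫ θ in (0:ℝ)..(2*π), cn θ * e2 (s, θ))
      = -((n:ℂ)^2) * ∫ θ in (0:ℝ)..(2*π), cn θ * w s θ := by
    intro s
    rw [ibp2 s, ibp1 s]
    linear_combination ((n:ℂ)^2 * (∫ θ in (0:ℝ)..(2*π), cn θ * w s θ)) * Complex.I_sq
  have hAcomm : ∀ s, (∫ θ in (0:ℝ)..(2*π), cn θ * w s θ)
      = ∫ θ in (0:ℝ)..(2*π), w s θ * cn θ := fun s =>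
    intervalIntegral.integral_congr (fun θ _ => mul_comm _ _)
  -- differentiation under the integral
  have hF1 : ∀ s, HasDerivAt (fun s' => ∫ θ in (0:ℝ)..(2*π), w s' θ * cn θ)
      (∫ θ in (0:ℝ)..(2*π), d1 (s, θ) * cn θ) s := by
    intro s
    exact hasDerivAt_paramInt (hWc.mul (hcnc.comp continuous_snd))
      (hd1.continuous.mul (hcnc.comp continuous_snd))
      (fun s θ => (hDs θ s).mul_const (cn θ)) s
  have hF2 : ∀ s, HasDerivAt (fun s' => ∫ θ in (0:ℝ)..(2*π), d1 (s', θ) * cn θ)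
      (∫ θ in (0:ℝ)..(2*π), d2 (s, θ) * cn θ) s := by
    intro s
    exact hasDerivAt_paramInt (hd1.continuous.mul (hcnc.comp continuous_snd))
      (hd2c.mul (hcnc.comp continuous_snd))
      (fun s θ => (hDs2 θ s).mul_const (cn θ)) s
  -- the key identity for the second derivative integrand
  have hkey : ∀ s, (∫ θ in (0:ℝ)..(2*π), d2 (s, θ) * cn θ)
      = (((n:ℝ)^2 - 2 / (Real.cosh s)^2 : ℝ) : ℂ)
          * ∫ θ in (0:ℝ)..(2*π), w s θ * cn θ := by
    intro s
    have h1 : (∫ θ in (0:ℝ)..(2*π), d2 (s, θ) * cn θ)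
        = ∫ θ in (0:ℝ)..(2*π),
            (-(cn θ * e2 (s, θ)) - ((2/(Real.cosh s)^2:ℝ):ℂ) * (cn θ * w s θ)) := by
      apply intervalIntegral.integral_congr
      intro θ _
      show d2 (s, θ) * cn θ = _
      rw [heq' s θ]; ring
    have hi1 : IntervalIntegrable (fun θ => -(cn θ * e2 (s, θ))) MeasureTheory.volume 0 (2*π) :=
      ((hcnc.mul (he2slice s)).neg).intervalIntegrable _ _
    have hi2 : IntervalIntegrable (fun θ => ((2/(Real.cosh s)^2:ℝ):ℂ) * (cn θ * w s θ))
        MeasureTheory.volume 0 (2*π) :=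
      (continuous_const.mul (hcnc.mul (hslice s))).intervalIntegrable _ _
    rw [h1, intervalIntegral.integral_sub hi1 hi2, intervalIntegral.integral_neg,
      intervalIntegral.integral_const_mul, ibp s, hAcomm s]
    push_cast
    ring
  -- assemble the ODE for the Fourier coefficient
  set f := cylFourierCoeff w n with hfdef
  set g : ℝ → ℂ := fun s => (1/(2*(π:ℂ))) * ∫ θ in (0:ℝ)..(2*π), d1 (s, θ) * cn θ with hgdef
  have hf1 : ∀ s, HasDerivAt f (g s) s := by
    intro s
    have h := (hF1 s).const_mul (1/(2*(π:ℂ)))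
    exact h
  have hf2 : ∀ s, HasDerivAt g ((((n:ℝ)^2 - 2/(Real.cosh s)^2 : ℝ):ℂ) * f s) s := by
    intro s
    have h := (hF2 s).const_mul (1/(2*(π:ℂ)))
    rw [hkey s] at h
    convert h using 1
    show (((n:ℝ)^2 - 2/(Real.cosh s)^2 : ℝ):ℂ) * f s
        = (1/(2*(π:ℂ))) * ((((n:ℝ)^2 - 2/(Real.cosh s)^2 : ℝ):ℂ)
            * ∫ θ in (0:ℝ)..(2*π), w s θ * cn θ)
    rw [hfdef]
    show _ = _
    unfold cylFourierCoeff
    ring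
    rfl
  obtain ⟨C, a, ha, hC⟩ := hdecay n hn
  have hdec : ∀ s, ‖f s‖ ≤ C * Real.exp (-a*|s|) := fun s =>
    le_trans (le_add_of_nonneg_right (norm_nonneg _)) (hC s)
  have hq : ∀ s, (0:ℝ) ≤ (n:ℝ)^2 - 2/(Real.cosh s)^2 := by
    intro s
    have h1 : (1:ℝ) ≤ Real.cosh s := Real.one_le_cosh s
    have h2 : (1:ℝ) ≤ (Real.cosh s)^2 := by nlinarith
    have h3 : 2/(Real.cosh s)^2 ≤ 2 := by
      rw [div_le_iff₀ (by positivity)]; nlinarith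
    have h4 : (4:ℝ) ≤ (n:ℝ)^2 := by
      have h5 : (2:ℝ) ≤ |(n:ℝ)| := by
        rw [← Int.cast_abs]
        exact_mod_cast hn
      nlinarith [_root_.sq_abs ((n:ℝ))]
    linarith
  exact complex_ode_vanish hf1 hf2 hq ha hdec
end
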